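/- Suppose f is C⁴ on a neighbourhood of x(t₀), x is four times differentiable at t₀ ∈ (0,1), the natural pathway equation f(x(t)) = (1−t) • f(x(0)) holds for all t ∈ [0,1], and J := f′(x(t₀)) is a continuous linear isomorphism from E onto F. Then, writing v₁ = x′(t₀), v₂ = x″(t₀), v₃ = x⁽³⁾(t₀), the fourth derivative of the pathway satisfies x⁽⁴⁾(t₀) = −J⁻¹( f⁽⁴⁾(x(t₀))[v₁,v₁,v₁,v₁] + 6 • f⁽³⁾(x(t₀))[v₁,v₁,v₂] + 4 • f″(x(t₀))[v₁,v₃] + 3 • f″(x(t₀))[v₂,v₂] ). -/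

import Mathlib

open Topology

set_option maxHeartbeats 4000000 in
/-- Fourth-order pathway derivative: with `v₁ = x′(t₀)`, `v₂ = x″(t₀)`,
`v₃ = x⁽³⁾(t₀)`,
`x⁽⁴⁾(t₀) = -J⁻¹ (f⁽⁴⁾[v₁,v₁,v₁,v₁] + 6 • f⁽³⁾[v₁,v₁,v₂] + 4 • f″[v₁,v₃] + 3 • f″[v₂,v₂])`. -/
theorem natural_pathway_fourth_deriv
    {E F : Type*} [NormedAddCommGroup E] [NormedSpace ℝ E] [CompleteSpace E]
    [NormedAddCommGroup F] [NormedSpace ℝ F] [CompleteSpace F]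
    (f : E → F) (x : ℝ → E) (t₀ : ℝ) (ht₀ : t₀ ∈ Set.Ioo (0 : ℝ) 1)
    (hf : ContDiffAt ℝ 4 f (x t₀))
    (hx1 : ∀ᶠ s in 𝓝 t₀, DifferentiableAt ℝ x s)
    (hx2 : ∀ᶠ s in 𝓝 t₀, DifferentiableAt ℝ (iteratedDeriv 1 x) s)
    (hx3 : ∀ᶠ s in 𝓝 t₀, DifferentiableAt ℝ (iteratedDeriv 2 x) s)
    (hx4 : DifferentiableAt ℝ (iteratedDeriv 3 x) t₀)
    (hpath : ∀ t ∈ Set.Icc (0 : ℝ) 1, f (x t) = (1 - t) • f (x 0))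
    (J : E ≃L[ℝ] F) (hJ : (J : E →L[ℝ] F) = fderiv ℝ f (x t₀))
    (v₁ v₂ v₃ : E) (hv₁ : v₁ = deriv x t₀) (hv₂ : v₂ = iteratedDeriv 2 x t₀)
    (hv₃ : v₃ = iteratedDeriv 3 x t₀) :
    iteratedDeriv 4 x t₀ =
      -J.symm (iteratedFDeriv ℝ 4 f (x t₀) ![v₁, v₁, v₁, v₁]
        + (6 : ℝ) • iteratedFDeriv ℝ 3 f (x t₀) ![v₁, v₁, v₂]
        + (4 : ℝ) • iteratedFDeriv ℝ 2 f (x t₀) ![v₁, v₃]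
        + (3 : ℝ) • iteratedFDeriv ℝ 2 f (x t₀) ![v₂, v₂]) := by
  -- smoothness facts near x t₀
  have hf4 : ∀ᶠ y in 𝓝 (x t₀), ContDiffAt ℝ 4 f y := hf.eventually (by simp)
  have hc1s : ∀ᶠ y in 𝓝 (x t₀), ContDiffAt ℝ 3 (fderiv ℝ f) y :=
    hf4.mono fun y hy => hy.fderiv_right (by norm_num)
  have hc2s : ∀ᶠ y in 𝓝 (x t₀), ContDiffAt ℝ 2 (fderiv ℝ (fderiv ℝ f)) y :=
    hc1s.mono fun y hy => hy.fderiv_right (by norm_num)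
  letI : NormedAddCommGroup (E →L[ℝ] E →L[ℝ] E →L[ℝ] F) :=
    ContinuousLinearMap.toNormedAddCommGroup (𝕜 := ℝ) (𝕜₂ := ℝ) (E := E)
      (F := E →L[ℝ] E →L[ℝ] F) (σ₁₂ := RingHom.id ℝ)
  letI : NormedSpace ℝ (E →L[ℝ] E →L[ℝ] E →L[ℝ] F) :=
    ContinuousLinearMap.toNormedSpace (𝕜 := ℝ) (𝕜₂ := ℝ) (𝕜' := ℝ) (E := E)
      (F := E →L[ℝ] E →L[ℝ] F) (σ₁₂ := RingHom.id ℝ)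
  have hc3s : ∀ᶠ y in 𝓝 (x t₀), ContDiffAt ℝ 1 (fderiv ℝ (fderiv ℝ (fderiv ℝ f))) y :=
    hc2s.mono fun y hy => hy.fderiv_right (by norm_num)
  have hd1 : ∀ᶠ y in 𝓝 (x t₀), HasFDerivAt f (fderiv ℝ f y) y :=
    hf4.mono fun y hy => (hy.differentiableAt (by norm_num)).hasFDerivAt
  have hd2 : ∀ᶠ y in 𝓝 (x t₀), HasFDerivAt (fderiv ℝ f) (fderiv ℝ (fderiv ℝ f) y) y :=
    hc1s.mono fun y hy => (hy.differentiableAt (by norm_num)).hasFDerivAt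
  have hd3 : ∀ᶠ y in 𝓝 (x t₀), HasFDerivAt (fderiv ℝ (fderiv ℝ f))
      (fderiv ℝ (fderiv ℝ (fderiv ℝ f)) y) y :=
    hc2s.mono fun y hy => (hy.differentiableAt (by norm_num)).hasFDerivAt
  have hd4 : HasFDerivAt (fderiv ℝ (fderiv ℝ (fderiv ℝ f)))
      (fderiv ℝ (fderiv ℝ (fderiv ℝ (fderiv ℝ f))) (x t₀)) (x t₀) :=
    ((hc3s.self_of_nhds).differentiableAt (by norm_num)).hasFDerivAt
  have hD3 : HasFDerivAt (fderiv ℝ (fderiv ℝ f))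
      (fderiv ℝ (fderiv ℝ (fderiv ℝ f)) (x t₀)) (x t₀) := hd3.self_of_nhds
  -- symmetry of higher derivatives
  have sym2 : ∀ a b : E, fderiv ℝ (fderiv ℝ f) (x t₀) a b
      = fderiv ℝ (fderiv ℝ f) (x t₀) b a :=
    fun a b => hf.isSymmSndFDerivAt (by norm_num) a b
  have sym3a : ∀ a b c : E, fderiv ℝ (fderiv ℝ (fderiv ℝ f)) (x t₀) a b c
      = fderiv ℝ (fderiv ℝ (fderiv ℝ f)) (x t₀) b a c := fun a b c =>
    DFunLike.congr_fun (hc1s.self_of_nhds.isSymmSndFDerivAt (by norm_num) a b) c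
  have sym3b : ∀ a b c : E, fderiv ℝ (fderiv ℝ (fderiv ℝ f)) (x t₀) a b c
      = fderiv ℝ (fderiv ℝ (fderiv ℝ f)) (x t₀) a c b := by
    intro a b c
    have hb := (hD3.clm_apply (hasFDerivAt_const b (x t₀))).clm_apply
      (hasFDerivAt_const c (x t₀))
    have hc := (hD3.clm_apply (hasFDerivAt_const c (x t₀))).clm_apply
      (hasFDerivAt_const b (x t₀))
    have heq : (fun y => fderiv ℝ (fderiv ℝ f) y b c) =ᶠ[𝓝 (x t₀)]
        (fun y => fderiv ℝ (fderiv ℝ f) y c b) := by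
      filter_upwards [hf4] with y hy
      exact hy.isSymmSndFDerivAt (by norm_num) b c
    have h1 := (hb.congr_of_eventuallyEq heq.symm).unique hc
    have h2 := DFunLike.congr_fun h1 a
    simpa using h2
  -- iterated derivatives of x as repeated derivs
  have e2 : iteratedDeriv 2 x = deriv (deriv x) := by
    rw [show (2:ℕ) = 1 + 1 from rfl, iteratedDeriv_succ, iteratedDeriv_one]
  have e3 : iteratedDeriv 3 x = deriv (deriv (deriv x)) := by
    rw [show (3:ℕ) = 2 + 1 from rfl, iteratedDeriv_succ, e2]
  have e4 : iteratedDeriv 4 x = deriv (deriv (deriv (deriv x))) := by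
    rw [show (4:ℕ) = 3 + 1 from rfl, iteratedDeriv_succ, e3]
  rw [iteratedDeriv_one] at hx2
  rw [e2] at hx3
  rw [e3] at hx4
  have H1 : ∀ᶠ s in 𝓝 t₀, HasDerivAt x (deriv x s) s :=
    hx1.mono fun s hs => hs.hasDerivAt
  have H2 : ∀ᶠ s in 𝓝 t₀, HasDerivAt (deriv x) (deriv (deriv x) s) s :=
    hx2.mono fun s hs => hs.hasDerivAt
  have H3 : ∀ᶠ s in 𝓝 t₀, HasDerivAt (deriv (deriv x)) (deriv (deriv (deriv x)) s) s :=
    hx3.mono fun s hs => hs.hasDerivAt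
  have H4 : HasDerivAt (deriv (deriv (deriv x)))
      (deriv (deriv (deriv (deriv x))) t₀) t₀ := hx4.hasDerivAt
  have hxc : ContinuousAt x t₀ := hx1.self_of_nhds.continuousAt
  -- composite derivatives along the path
  have hg0 : ∀ᶠ s in 𝓝 t₀, HasDerivAt (fun s => f (x s))
      (fderiv ℝ f (x s) (deriv x s)) s := by
    filter_upwards [hxc.eventually hd1, H1] with s h1 h2 using h1.comp_hasDerivAt s h2
  have hgc1 : ∀ᶠ s in 𝓝 t₀, HasDerivAt (fun s => fderiv ℝ f (x s))
      (fderiv ℝ (fderiv ℝ f) (x s) (deriv x s)) s := by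
    filter_upwards [hxc.eventually hd2, H1] with s h1 h2 using h1.comp_hasDerivAt s h2
  have hgc2 : ∀ᶠ s in 𝓝 t₀, HasDerivAt (fun s => fderiv ℝ (fderiv ℝ f) (x s))
      (fderiv ℝ (fderiv ℝ (fderiv ℝ f)) (x s) (deriv x s)) s := by
    filter_upwards [hxc.eventually hd3, H1] with s h1 h2 using
      HasFDerivAt.comp_hasDerivAt (l := fderiv ℝ (fderiv ℝ f))
        (l' := fderiv ℝ (fderiv ℝ (fderiv ℝ f)) (x s)) s h1 h2
  have hgc3 : HasDerivAt (fun s => fderiv ℝ (fderiv ℝ (fderiv ℝ f)) (x s))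
      (fderiv ℝ (fderiv ℝ (fderiv ℝ (fderiv ℝ f))) (x t₀) (deriv x t₀)) t₀ :=
    hd4.comp_hasDerivAt t₀ H1.self_of_nhds
  -- first-order: deriv of f ∘ x is the constant -f (x 0) near t₀
  have hIoo : ∀ᶠ s in 𝓝 t₀, s ∈ Set.Ioo (0:ℝ) 1 := isOpen_Ioo.eventually_mem ht₀
  have key1 : ∀ᶠ s in 𝓝 t₀, fderiv ℝ f (x s) (deriv x s) = -f (x 0) := by
    filter_upwards [hIoo, hg0] with s hs hder
    have haff : HasDerivAt (fun r : ℝ => (1 - r) • f (x 0)) (-f (x 0)) s := by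
      simpa using ((hasDerivAt_id s).const_sub (1:ℝ)).smul_const (f (x 0))
    have heq : (fun r => f (x r)) =ᶠ[𝓝 s] fun r => (1 - r) • f (x 0) := by
      filter_upwards [isOpen_Ioo.mem_nhds hs] with r hr
        using hpath r (Set.Ioo_subset_Icc_self hr)
    exact hder.unique (haff.congr_of_eventuallyEq heq)
  -- second order
  have hg1 : ∀ᶠ s in 𝓝 t₀, HasDerivAt (fun s => fderiv ℝ f (x s) (deriv x s))
      (fderiv ℝ (fderiv ℝ f) (x s) (deriv x s) (deriv x s)
        + fderiv ℝ f (x s) (deriv (deriv x) s)) s := by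
    filter_upwards [hgc1, H1, H2] with s h1 hH1 hH2 using h1.clm_apply hH2
  have key2 : ∀ᶠ s in 𝓝 t₀, fderiv ℝ (fderiv ℝ f) (x s) (deriv x s) (deriv x s)
      + fderiv ℝ f (x s) (deriv (deriv x) s) = 0 := by
    filter_upwards [key1.eventually_nhds, hg1] with s hs hder
    exact hder.unique ((hasDerivAt_const s (-f (x 0))).congr_of_eventuallyEq hs)
  -- third order
  have hg2 : ∀ᶠ s in 𝓝 t₀, HasDerivAt
      (fun s => fderiv ℝ (fderiv ℝ f) (x s) (deriv x s) (deriv x s)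
        + fderiv ℝ f (x s) (deriv (deriv x) s))
      (((fderiv ℝ (fderiv ℝ (fderiv ℝ f)) (x s) (deriv x s) (deriv x s)
          + fderiv ℝ (fderiv ℝ f) (x s) (deriv (deriv x) s)) (deriv x s)
        + fderiv ℝ (fderiv ℝ f) (x s) (deriv x s) (deriv (deriv x) s))
        + (fderiv ℝ (fderiv ℝ f) (x s) (deriv x s) (deriv (deriv x) s)
          + fderiv ℝ f (x s) (deriv (deriv (deriv x)) s))) s := by
    filter_upwards [hgc1, hgc2, H1, H2, H3] with s h1 h2 hH1 hH2 hH3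
    exact (((h2.clm_apply hH2).clm_apply hH2).add (h1.clm_apply hH3))
  have key3 : ∀ᶠ s in 𝓝 t₀,
      ((fderiv ℝ (fderiv ℝ (fderiv ℝ f)) (x s) (deriv x s) (deriv x s)
          + fderiv ℝ (fderiv ℝ f) (x s) (deriv (deriv x) s)) (deriv x s)
        + fderiv ℝ (fderiv ℝ f) (x s) (deriv x s) (deriv (deriv x) s))
        + (fderiv ℝ (fderiv ℝ f) (x s) (deriv x s) (deriv (deriv x) s)
          + fderiv ℝ f (x s) (deriv (deriv (deriv x)) s)) = 0 := by
    filter_upwards [key2.eventually_nhds, hg2] with s hs hder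
    exact hder.unique ((hasDerivAt_const s (0:F)).congr_of_eventuallyEq hs)
  -- fourth order, at t₀ only
  have A1' := HasDerivAt.clm_apply (c := fun s => fderiv ℝ (fderiv ℝ (fderiv ℝ f)) (x s))
    (c' := fderiv ℝ (fderiv ℝ (fderiv ℝ (fderiv ℝ f))) (x t₀) (deriv x t₀)) hgc3 H2.self_of_nhds
  have A1 := A1'.clm_apply H2.self_of_nhds
  have A2 := hgc2.self_of_nhds.clm_apply H3.self_of_nhds
  have A3 := (A1.add A2).clm_apply H2.self_of_nhds
  have B := (hgc2.self_of_nhds.clm_apply H2.self_of_nhds).clm_apply H3.self_of_nhds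
  have Cc := hgc1.self_of_nhds.clm_apply H4
  have hg3 := (A3.add B).add (B.add Cc)
  have key4 := hg3.unique ((hasDerivAt_const t₀ (0:F)).congr_of_eventuallyEq key3)
  simp only [ContinuousLinearMap.add_apply, Pi.add_apply] at key4
  -- normalize the third-derivative and second-derivative terms via symmetry
  rw [show fderiv ℝ (fderiv ℝ (fderiv ℝ f)) (x t₀) (deriv (deriv x) t₀) (deriv x t₀)
        (deriv x t₀)
      = fderiv ℝ (fderiv ℝ (fderiv ℝ f)) (x t₀) (deriv x t₀) (deriv x t₀)
        (deriv (deriv x) t₀) from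
      (sym3a _ _ _).trans (sym3b _ _ _)] at key4
  rw [show fderiv ℝ (fderiv ℝ (fderiv ℝ f)) (x t₀) (deriv x t₀) (deriv (deriv x) t₀)
        (deriv x t₀)
      = fderiv ℝ (fderiv ℝ (fderiv ℝ f)) (x t₀) (deriv x t₀) (deriv x t₀)
        (deriv (deriv x) t₀) from sym3b _ _ _] at key4
  rw [show fderiv ℝ (fderiv ℝ f) (x t₀) (deriv (deriv (deriv x)) t₀) (deriv x t₀)
      = fderiv ℝ (fderiv ℝ f) (x t₀) (deriv x t₀) (deriv (deriv (deriv x)) t₀) from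
      sym2 _ _] at key4
  -- convert iterated Fréchet derivatives in the goal
  have iFD2 : ∀ a b : E, iteratedFDeriv ℝ 2 f (x t₀) ![a,b]
      = fderiv ℝ (fderiv ℝ f) (x t₀) a b := by
    intro a b; rw [iteratedFDeriv_two_apply]; rfl
  have iFD3 : ∀ a b c : E, iteratedFDeriv ℝ 3 f (x t₀) ![a,b,c]
      = fderiv ℝ (fderiv ℝ (fderiv ℝ f)) (x t₀) a b c := by
    intro a b c
    rw [iteratedFDeriv_succ_apply_right, iteratedFDeriv_two_apply]; rfl
  have iFD4 : ∀ a b c d : E, iteratedFDeriv ℝ 4 f (x t₀) ![a,b,c,d]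
      = fderiv ℝ (fderiv ℝ (fderiv ℝ (fderiv ℝ f))) (x t₀) a b c d := by
    intro a b c d
    rw [iteratedFDeriv_succ_apply_right, iteratedFDeriv_succ_apply_right,
      iteratedFDeriv_two_apply]; rfl
  subst hv₁ hv₂ hv₃
  rw [e4, e2, e3, iFD4, iFD3, iFD2, iFD2]
  rw [← map_neg J.symm, ContinuousLinearEquiv.eq_symm_apply]
  have hJ' : J (deriv (deriv (deriv (deriv x))) t₀)
      = fderiv ℝ f (x t₀) (deriv (deriv (deriv (deriv x))) t₀) := by
    rw [← hJ]; rfl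
  rw [hJ']
  have hfinal : fderiv ℝ f (x t₀) (deriv (deriv (deriv (deriv x))) t₀)
      + (fderiv ℝ (fderiv ℝ (fderiv ℝ (fderiv ℝ f))) (x t₀) (deriv x t₀) (deriv x t₀)
          (deriv x t₀) (deriv x t₀)
        + (6:ℝ) • fderiv ℝ (fderiv ℝ (fderiv ℝ f)) (x t₀) (deriv x t₀) (deriv x t₀)
          (deriv (deriv x) t₀)
        + (4:ℝ) • fderiv ℝ (fderiv ℝ f) (x t₀) (deriv x t₀) (deriv (deriv (deriv x)) t₀)
        + (3:ℝ) • fderiv ℝ (fderiv ℝ f) (x t₀) (deriv (deriv x) t₀)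
          (deriv (deriv x) t₀)) = 0 := by
    rw [← key4]; module
  exact eq_neg_of_add_eq_zero_left hfinal
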